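/- Let $\Phi \in H^\infty_{\mathcal{B}(E_2, E)}(\mathbb{T})$ be inner, $\sigma > 0$, $\theta \in [0, 2\pi)$. If $(g, y) \in \mathcal{G}_\Phi$ (i.e., $zg + \sigma y = e^{i\theta} g + \Phi x$ for some $x \in E_2$) and $y = 0$, then $g = 0$ and $x = 0$. -/

import Mathlib

open Complex

noncomputable section
set_option linter.unusedSectionVars false

/-- The `E`-valued Hardy space `H²_E(𝕋)`, modeled by the ℓ² space of its
Taylor/Fourier coefficient sequences. -/
abbrev Hardy (E : Type*) [NormedAddCommGroup E] [InnerProductSpace ℂ E] [CompleteSpace E] :=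
  lp (fun _ : ℕ => E) 2

variable {E : Type*} [NormedAddCommGroup E] [InnerProductSpace ℂ E] [CompleteSpace E]

def shiftSeq (f : ℕ → E) : ℕ → E
  | 0 => 0
  | n + 1 => f n

lemma memℓp_shiftSeq {f : ℕ → E} (hf : Memℓp f 2) : Memℓp (shiftSeq f) 2 := by
  have h := hf.summable (by norm_num)
  exact memℓp_gen ((summable_nat_add_iff 1).mp (by simpa [shiftSeq] using h))

/-- The shift `S_E : f ↦ z f` on `H²_E(𝕋)`. -/
def shiftOp (f : Hardy E) : Hardy E := ⟨shiftSeq f, memℓp_shiftSeq (lp.memℓp f)⟩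

/-- The inclusion `i_E : E → H²_E(𝕋)` sending `x` to the constant function `x`. -/
def inclOp (y : E) : Hardy E := lp.single 2 (0 : ℕ) y

/-- The Brownian shift `B^E_{σ, e^{iθ}}` of covariance `σ` and angle `θ` on
`H²_E(𝕋) ⊕ E`: `(f, y) ↦ (zf + σ y, e^{iθ} y)`. -/
def BS (σ θ : ℝ) (v : Hardy E × E) : Hardy E × E :=
  (shiftOp v.1 + (σ : ℂ) • inclOp v.2, Complex.exp (θ * I) • v.2)

local notation "⟪" x ", " y "⟫" => @inner ℂ _ _ x y

lemma inner_shiftOp (u v : Hardy E) : ⟪shiftOp u, shiftOp v⟫ = ⟪u, v⟫ := by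
  rw [lp.inner_eq_tsum, lp.inner_eq_tsum,
    Summable.tsum_eq_zero_add (lp.summable_inner (𝕜 := ℂ) (shiftOp u) (shiftOp v))]
  simp [shiftOp, shiftSeq]

lemma norm_shiftOp (u : Hardy E) : ‖shiftOp u‖ = ‖u‖ := by
  have h := inner_shiftOp u u
  rw [@inner_self_eq_norm_sq_to_K ℂ, @inner_self_eq_norm_sq_to_K ℂ] at h
  have h2 : ‖shiftOp u‖ ^ 2 = ‖u‖ ^ 2 := by exact_mod_cast h
  nlinarith [norm_nonneg (shiftOp u), norm_nonneg u]

lemma shiftOp_single (n : ℕ) (x : E) :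
    shiftOp (lp.single 2 n x) = lp.single 2 (n + 1) x := by
  ext i
  cases i with
  | zero => simp [shiftOp, shiftSeq, lp.single_apply]
  | succ m => simp [shiftOp, shiftSeq, lp.single_apply, Pi.single_apply]

lemma inclOp_zero : inclOp (0 : E) = 0 := by
  ext i
  simp [inclOp, lp.single_apply]

/-- Lemma 2.2 (second part): if `(g, y) ∈ 𝒢_Φ` with witness `x` and `y = 0`,
then `g = 0` and `x = 0`. -/
theorem defect_vector_zero_of_snd_zero
    {E₂ : Type*} [NormedAddCommGroup E₂] [InnerProductSpace ℂ E₂] [CompleteSpace E₂]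
    (σ θ : ℝ) (hσ : 0 < σ) (hθ : θ ∈ Set.Ico 0 (2 * Real.pi))
    (T : Hardy E₂ →L[ℂ] Hardy E)
    (hTiso : ∀ h : Hardy E₂, ‖T h‖ = ‖h‖)
    (hTcomm : ∀ h : Hardy E₂, T (shiftOp h) = shiftOp (T h))
    (g : Hardy E) (y : E) (x : E₂)
    (heq : shiftOp g + (σ : ℂ) • inclOp y = Complex.exp (θ * I) • g + T (inclOp x))
    (hy : y = 0) :
    g = 0 ∧ x = 0 := by
  subst hy
  rw [inclOp_zero, smul_zero, add_zero] at heq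
  set lam := Complex.exp (θ * I) with hlam
  have hlamne : lam ≠ 0 := Complex.exp_ne_zero _
  have hlamnorm : ‖lam‖ = 1 := by
    simp [hlam, Complex.norm_exp]
  set Tiso : Hardy E₂ →ₗᵢ[ℂ] Hardy E := ⟨T, hTiso⟩ with hT
  set hk : ℕ → Hardy E := fun k => T (lp.single 2 k x) with hhk
  have hshift : ∀ k, shiftOp (hk k) = hk (k + 1) := by
    intro k
    rw [hhk]
    dsimp only
    rw [← hTcomm, shiftOp_single]
  have hk0 : hk 0 = T (inclOp x) := rfl
  have hinner : ∀ j k : ℕ, ⟪hk j, hk k⟫ = if j = k then ((‖x‖ : ℂ)) ^ 2 else 0 := by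
    intro j k
    have hmap : ⟪hk j, hk k⟫ = ⟪lp.single 2 j x, (lp.single 2 k x : Hardy E₂)⟫ :=
      Tiso.inner_map_map (lp.single 2 j x) (lp.single 2 k x)
    rw [hmap, lp.inner_single_left]
    by_cases hjk : j = k
    · subst hjk
      simp [lp.single_apply_self, inner_self_eq_norm_sq_to_K]
    · rw [lp.single_apply_ne _ _ _ hjk]
      simp [hjk]
  have hnormh : ‖T (inclOp x)‖ = ‖x‖ := by
    rw [hTiso]
    exact lp.norm_single (E := fun _ : ℕ => E₂) (p := 2) (by norm_num) 0 x
  have hgh0 : ∀ k, ⟪T (inclOp x), hk (k + 1)⟫ = 0 := by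
    intro k
    rw [← hk0, hinner]
    simp
  have hrec : ∀ k, (starRingEnd ℂ) lam * ⟪g, hk (k + 1)⟫ = ⟪g, hk k⟫ := by
    intro k
    have h1 : ⟪shiftOp g, shiftOp (hk k)⟫ = ⟪g, hk k⟫ := inner_shiftOp _ _
    rw [heq, hshift, inner_add_left, inner_smul_left, hgh0, add_zero] at h1
    exact h1
  have habs : ∀ k, ‖⟪g, hk k⟫‖ = ‖⟪g, hk 0⟫‖ := by
    intro k
    induction k with
    | zero => rfl
    | succ n ih =>
      have h2 := congrArg norm (hrec n)
      rw [norm_mul, RCLike.norm_conj, hlamnorm, one_mul] at h2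
      rw [h2, ih]
  have hx0 : x = 0 := by
    by_contra hx
    have hxn : (0 : ℝ) < ‖x‖ := norm_pos_iff.mpr hx
    have hon : Orthonormal ℂ (fun k => ((‖x‖ : ℂ))⁻¹ • hk k) := by
      rw [orthonormal_iff_ite]
      intro i j
      rw [inner_smul_left, inner_smul_right, hinner]
      by_cases hij : i = j
      · subst hij
        simp only [if_pos rfl, map_inv₀, Complex.conj_ofReal]
        rw [sq]
        field_simp
        simp [hxn.ne']
      · simp [hij]
    have hsum := hon.inner_products_summable g
    have hconst : ∀ k : ℕ,
        ‖⟪((‖x‖ : ℂ))⁻¹ • hk k, g⟫‖ ^ 2 = (‖x‖⁻¹ * ‖⟪g, hk 0⟫‖) ^ 2 := by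
      intro k
      rw [inner_smul_left, norm_mul, norm_inner_symm, habs k]
      congr 2
      simp
    have hsum' : Summable (fun _ : ℕ => (‖x‖⁻¹ * ‖⟪g, hk 0⟫‖) ^ 2) :=
      hsum.congr hconst
    have hzero : (‖x‖⁻¹ * ‖⟪g, hk 0⟫‖) ^ 2 = 0 := by
      by_contra hne
      exact hne (summable_const_iff _ |>.mp hsum')
    have hgh : ⟪g, hk 0⟫ = 0 := by
      have := pow_eq_zero_iff (n := 2) (by norm_num) |>.mp hzero
      rcases mul_eq_zero.mp this with h | h
      · exact absurd h (inv_ne_zero hxn.ne')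
      · exact norm_eq_zero.mp h
    have hne : ‖shiftOp g‖ ^ 2 = ‖g‖ ^ 2 := by rw [norm_shiftOp]
    have hexp : ‖shiftOp g‖ ^ 2 =
        ‖lam • g‖ ^ 2 + 2 * Complex.re ⟪lam • g, T (inclOp x)⟫ + ‖T (inclOp x)‖ ^ 2 := by
      rw [heq]
      exact @norm_add_sq ℂ _ _ _ _ _ _
    have hcross : ⟪lam • g, T (inclOp x)⟫ = 0 := by
      rw [inner_smul_left, ← hk0, hgh, mul_zero]
    rw [hcross, hne, norm_smul, hlamnorm, one_mul, hnormh] at hexp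
    simp only [Complex.zero_re, mul_zero, add_zero] at hexp
    nlinarith
  refine ⟨?_, hx0⟩
  rw [hx0, inclOp_zero, map_zero, add_zero] at heq
  have hcoord : ∀ n, (g : ℕ → E) n = 0 := by
    have h1 : ∀ n, shiftSeq (g : ℕ → E) n = lam • (g : ℕ → E) n := by
      intro n
      have := congrArg (fun f : Hardy E => (f : ℕ → E) n) heq
      simpa [shiftOp] using this
    intro n
    induction n with
    | zero =>
      have := (h1 0).symm
      simp only [shiftSeq] at this
      exact (smul_eq_zero.mp this).resolve_left hlamne
    | succ m ih =>
      have := h1 (m + 1)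
      simp only [shiftSeq, ih] at this
      exact (smul_eq_zero.mp this.symm).resolve_left hlamne
  ext n
  simpa using hcoord n
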